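/- arXiv:1905.07570 — 3 statements merged into one kernel-verified Lean document; each statement's English description precedes it below -/
import Mathlib

section
/- For all 1 ≤ l ≤ k < m, the quantities A and B satisfy the recursion B_{l,k+1} = B_{l,k} − A_{k,k+1} + A_{k+1,k+1}. -/
open Finset

/-- `F_k = {i ∈ F : k_i ≥ k}`. -/
def featSet (F : Finset ℕ) (kk : ℕ → ℕ) (k : ℕ) : Finset ℕ :=
  F.filter (fun i => k ≤ kk i)

/-- `A_{l,k} = Σ_{i,j∈F_k, i<j} ⟨v_i^{(l)}, v_j^{(l)}⟩ x_i x_j`. -/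
noncomputable def Asum (F : Finset ℕ) (x : ℕ → ℝ) (kk : ℕ → ℕ) (D : ℕ → ℕ)
    (v : (k : ℕ) → ℕ → Fin (D k) → ℝ) (l k : ℕ) : ℝ :=
  ∑ i ∈ featSet F kk k, ∑ j ∈ (featSet F kk k).filter (fun j => i < j),
    (∑ f, v l i f * v l j f) * x i * x j

/-- `B_{l,k} = Σ_{i,j∈F, i<j} ⟨v_i^{(c_{ij})}, v_j^{(c_{ij})}⟩ x_i x_j` with
`c_{ij} = max(l, min(k, min(k_i, k_j)))`. -/
noncomputable def Bsum (F : Finset ℕ) (x : ℕ → ℝ) (kk : ℕ → ℕ) (D : ℕ → ℕ)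
    (v : (k : ℕ) → ℕ → Fin (D k) → ℝ) (l k : ℕ) : ℝ :=
  ∑ i ∈ F, ∑ j ∈ F.filter (fun j => i < j),
    (∑ f, v (max l (min k (min (kk i) (kk j)))) i f *
          v (max l (min k (min (kk i) (kk j)))) j f) * x i * x j

/-- For all `1 ≤ l ≤ k < m`: `B_{l,k+1} = B_{l,k} − A_{k,k+1} + A_{k+1,k+1}`. -/
theorem Bsum_recursion
    (F : Finset ℕ) (m : ℕ) (hm : 1 ≤ m) (x : ℕ → ℝ) (kk : ℕ → ℕ)
    (hk : ∀ i ∈ F, 1 ≤ kk i ∧ kk i ≤ m)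
    (D : ℕ → ℕ) (hD : ∀ a b, 1 ≤ a → a ≤ b → b ≤ m → D a ≤ D b)
    (v : (k : ℕ) → ℕ → Fin (D k) → ℝ)
    (l k : ℕ) (hl : 1 ≤ l) (hlk : l ≤ k) (hkm : k < m) :
    Bsum F x kk D v l (k + 1)
      = Bsum F x kk D v l k - Asum F x kk D v k (k + 1)
          + Asum F x kk D v (k + 1) (k + 1) := by
  have Aexp : ∀ l' : ℕ, Asum F x kk D v l' (k + 1)
      = ∑ i ∈ F, ∑ j ∈ F.filter (fun j => i < j),
        (if k + 1 ≤ kk i ∧ k + 1 ≤ kk j then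
          (∑ f, v l' i f * v l' j f) * x i * x j else 0) := by
    intro l'
    unfold Asum featSet
    rw [Finset.sum_filter]
    refine Finset.sum_congr rfl fun i _ => ?_
    rw [Finset.filter_comm, Finset.sum_filter]
    by_cases hi : k + 1 ≤ kk i
    · simp only [hi, if_true, true_and]
    · simp only [hi, if_false, false_and, Finset.sum_const_zero]
  unfold Bsum
  rw [Aexp, Aexp, ← Finset.sum_sub_distrib, ← Finset.sum_add_distrib]
  refine Finset.sum_congr rfl fun i _ => ?_
  rw [← Finset.sum_sub_distrib, ← Finset.sum_add_distrib]
  refine Finset.sum_congr rfl fun j _ => ?_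
  by_cases h : k + 1 ≤ kk i ∧ k + 1 ≤ kk j
  · have h1 : max l (min (k + 1) (min (kk i) (kk j))) = k + 1 := by omega
    have h2 : max l (min k (min (kk i) (kk j))) = k := by omega
    rw [h1, h2, if_pos h, if_pos h]
    ring
  · have h1 : max l (min (k + 1) (min (kk i) (kk j)))
        = max l (min k (min (kk i) (kk j))) := by omega
    rw [h1, if_neg h, if_neg h]
    ring
end

section
/- For all 1 ≤ l ≤ k ≤ m, B_{l,k} admits the telescoping decomposition B_{l,k} = A_{l,1} + Σ_{p=l}^{k-1} ( A_{p+1,p+1} − A_{p,p+1} ). In particular, the RaFM model satisfies B_{1,m} = A_{1,1} + Σ_{p=1}^{m-1} ( A_{p+1,p+1} − A_{p,p+1} ). -/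
open Finset

lemma Bsum_base (F : Finset ℕ) (x : ℕ → ℝ) (kk : ℕ → ℕ)
    (hk : ∀ i ∈ F, 1 ≤ kk i) (D : ℕ → ℕ)
    (v : (k : ℕ) → ℕ → Fin (D k) → ℝ) (l : ℕ) :
    Bsum F x kk D v l l = Asum F x kk D v l 1 := by
  unfold Bsum Asum featSet
  have hF : F.filter (fun i => 1 ≤ kk i) = F :=
    Finset.filter_true_of_mem (fun i hi => hk i hi)
  rw [hF]
  refine Finset.sum_congr rfl fun i _ => Finset.sum_congr rfl fun j _ => ?_
  rw [max_eq_left (min_le_left _ _)]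

lemma Bsum_step (F : Finset ℕ) (x : ℕ → ℝ) (kk : ℕ → ℕ) (D : ℕ → ℕ)
    (v : (k : ℕ) → ℕ → Fin (D k) → ℝ) (l k : ℕ) (hl : l ≤ k) :
    Bsum F x kk D v l (k + 1)
      = Bsum F x kk D v l k
        + (Asum F x kk D v (k + 1) (k + 1) - Asum F x kk D v k (k + 1)) := by
  have hA : Asum F x kk D v (k + 1) (k + 1) - Asum F x kk D v k (k + 1)
      = ∑ i ∈ F, ∑ j ∈ F.filter (fun j => i < j),
          (if (k + 1 ≤ kk i ∧ k + 1 ≤ kk j) then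
            ((∑ f, v (k+1) i f * v (k+1) j f) - (∑ f, v k i f * v k j f)) * x i * x j
          else 0) := by
    unfold Asum featSet
    rw [← Finset.sum_sub_distrib]
    rw [Finset.sum_filter]
    refine Finset.sum_congr rfl fun i hi => ?_
    by_cases hPi : k + 1 ≤ kk i
    · rw [if_pos hPi, ← Finset.sum_sub_distrib]
      rw [Finset.filter_comm, Finset.sum_filter]
      refine Finset.sum_congr rfl fun j hj => ?_
      by_cases hPj : k + 1 ≤ kk j
      · rw [if_pos hPj, if_pos ⟨hPi, hPj⟩]; ring
      · rw [if_neg hPj, if_neg (fun h => hPj h.2)]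
    · rw [if_neg hPi]
      refine (Finset.sum_eq_zero fun j hj => ?_).symm
      rw [if_neg (fun h => hPi h.1)]
  have hB : Bsum F x kk D v l (k + 1) - Bsum F x kk D v l k
      = ∑ i ∈ F, ∑ j ∈ F.filter (fun j => i < j),
          (if (k + 1 ≤ kk i ∧ k + 1 ≤ kk j) then
            ((∑ f, v (k+1) i f * v (k+1) j f) - (∑ f, v k i f * v k j f)) * x i * x j
          else 0) := by
    unfold Bsum
    rw [← Finset.sum_sub_distrib]
    refine Finset.sum_congr rfl fun i hi => ?_
    rw [← Finset.sum_sub_distrib]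
    refine Finset.sum_congr rfl fun j hj => ?_
    by_cases h : k + 1 ≤ kk i ∧ k + 1 ≤ kk j
    · rw [if_pos h]
      have hmin : k + 1 ≤ min (kk i) (kk j) := le_min h.1 h.2
      rw [min_eq_left hmin, min_eq_left (le_trans (Nat.le_succ k) hmin),
        max_eq_right (Nat.le_succ_of_le hl), max_eq_right hl]
      ring
    · rw [if_neg h]
      have hM : min (kk i) (kk j) ≤ k := by omega
      rw [min_eq_right hM, min_eq_right (le_trans hM (Nat.le_succ k)), sub_self]
  linarith [hA, hB]

/-- For `1 ≤ l ≤ k ≤ m`: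
`B_{l,k} = A_{l,1} + Σ_{p=l}^{k-1} (A_{p+1,p+1} − A_{p,p+1})`; in particular
`B_{1,m} = A_{1,1} + Σ_{p=1}^{m-1} (A_{p+1,p+1} − A_{p,p+1})`. -/
theorem Bsum_telescoping
    (F : Finset ℕ) (m : ℕ) (hm : 1 ≤ m) (x : ℕ → ℝ) (kk : ℕ → ℕ)
    (hk : ∀ i ∈ F, 1 ≤ kk i ∧ kk i ≤ m)
    (D : ℕ → ℕ) (hD : ∀ a b, 1 ≤ a → a ≤ b → b ≤ m → D a ≤ D b)
    (v : (k : ℕ) → ℕ → Fin (D k) → ℝ) :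
    (∀ l k, 1 ≤ l → l ≤ k → k ≤ m →
        Bsum F x kk D v l k
          = Asum F x kk D v l 1
            + ∑ p ∈ Finset.Ico l k,
                (Asum F x kk D v (p + 1) (p + 1) - Asum F x kk D v p (p + 1))) ∧
      Bsum F x kk D v 1 m
        = Asum F x kk D v 1 1
          + ∑ p ∈ Finset.Ico 1 m,
              (Asum F x kk D v (p + 1) (p + 1) - Asum F x kk D v p (p + 1)) := by
  have main : ∀ l k, 1 ≤ l → l ≤ k → k ≤ m →
      Bsum F x kk D v l k
        = Asum F x kk D v l 1
          + ∑ p ∈ Finset.Ico l k,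
              (Asum F x kk D v (p + 1) (p + 1) - Asum F x kk D v p (p + 1)) := by
    intro l k h1
    induction k with
    | zero => intro hlk _; exfalso; omega
    | succ n ih =>
      intro hlk hnm
      by_cases h : l ≤ n
      · rw [Finset.sum_Ico_succ_top h, Bsum_step F x kk D v l n h,
          ih h (Nat.le_of_succ_le hnm)]
        ring
      · have hl : l = n + 1 := by omega
        subst hl
        simp [Bsum_base F x kk (fun i hi => (hk i hi).1) D v]
  exact ⟨main, main 1 m le_rfl hm le_rfl⟩
end

section
/- For all 1 ≤ l ≤ k < m, the difference B_{l,k+1} − B_{l,k} depends only on the features in F_{k+1}: it equals Σ_{i,j∈F_{k+1}, i<j} ( ⟨v_i^{(k+1)}, v_j^{(k+1)}⟩ − ⟨v_i^{(k)}, v_j^{(k)}⟩ ) x_i x_j. -/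
open Finset

/-- For `1 ≤ l ≤ k < m`, the difference `B_{l,k+1} − B_{l,k}` depends only on
the features in `F_{k+1}`:
`B_{l,k+1} − B_{l,k}
  = Σ_{i,j∈F_{k+1}, i<j} (⟨v_i^{(k+1)},v_j^{(k+1)}⟩ − ⟨v_i^{(k)},v_j^{(k)}⟩) x_i x_j`. -/
theorem Bsum_diff_on_next_featSet
    (F : Finset ℕ) (m : ℕ) (hm : 1 ≤ m) (x : ℕ → ℝ) (kk : ℕ → ℕ)
    (hk : ∀ i ∈ F, 1 ≤ kk i ∧ kk i ≤ m)
    (D : ℕ → ℕ) (hD : ∀ a b, 1 ≤ a → a ≤ b → b ≤ m → D a ≤ D b)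
    (v : (k : ℕ) → ℕ → Fin (D k) → ℝ)
    (l k : ℕ) (hl : 1 ≤ l) (hlk : l ≤ k) (hkm : k < m) :
    Bsum F x kk D v l (k + 1) - Bsum F x kk D v l k
      = ∑ i ∈ featSet F kk (k + 1),
          ∑ j ∈ (featSet F kk (k + 1)).filter (fun j => i < j),
            ((∑ f, v (k + 1) i f * v (k + 1) j f)
              - (∑ f, v k i f * v k j f)) * x i * x j := by
  classical
  unfold Bsum featSet
  rw [← Finset.sum_sub_distrib]
  have hrhs :
      ∑ i ∈ F.filter (fun i => k + 1 ≤ kk i),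
          ∑ j ∈ (F.filter (fun i => k + 1 ≤ kk i)).filter (fun j => i < j),
            ((∑ f, v (k + 1) i f * v (k + 1) j f)
              - (∑ f, v k i f * v k j f)) * x i * x j
        = ∑ i ∈ F, ∑ j ∈ F.filter (fun j => i < j),
            (if k + 1 ≤ kk i ∧ k + 1 ≤ kk j then
              ((∑ f, v (k + 1) i f * v (k + 1) j f)
                - (∑ f, v k i f * v k j f)) * x i * x j else 0) := by
    rw [Finset.sum_filter]
    refine Finset.sum_congr rfl fun i _ => ?_
    rw [Finset.filter_filter, Finset.sum_filter, Finset.sum_filter]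
    by_cases h1 : k + 1 ≤ kk i
    · simp only [h1, if_true]
      refine Finset.sum_congr rfl fun j _ => ?_
      by_cases h2 : k + 1 ≤ kk j <;> by_cases h3 : i < j <;> simp [h1, h2, h3]
    · simp only [h1, if_false]
      symm
      apply Finset.sum_eq_zero
      intro j _
      simp [h1]
  rw [hrhs]
  apply Finset.sum_congr rfl
  intro i hi
  rw [← Finset.sum_sub_distrib]
  apply Finset.sum_congr rfl
  intro j hj
  by_cases h : k + 1 ≤ kk i ∧ k + 1 ≤ kk j
  · have hmin : min (kk i) (kk j) ≥ k + 1 := le_min h.1 h.2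
    have e1 : min (k + 1) (min (kk i) (kk j)) = k + 1 := min_eq_left hmin
    have e2 : min k (min (kk i) (kk j)) = k := min_eq_left (le_trans (Nat.le_succ k) hmin)
    rw [e1, e2, max_eq_right (Nat.le_succ_of_le hlk), max_eq_right hlk, if_pos h]
    ring
  · have hmin : min (kk i) (kk j) ≤ k := by
      rcases not_and_or.mp h with h1 | h1
      · exact le_trans (min_le_left _ _) (Nat.lt_succ_iff.mp (Nat.lt_of_not_le h1))
      · exact le_trans (min_le_right _ _) (Nat.lt_succ_iff.mp (Nat.lt_of_not_le h1))
    have e1 : min (k + 1) (min (kk i) (kk j)) = min (kk i) (kk j) :=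
      min_eq_right (le_trans hmin (Nat.le_succ k))
    have e2 : min k (min (kk i) (kk j)) = min (kk i) (kk j) := min_eq_right hmin
    rw [e1, e2, if_neg h, sub_self]
end
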